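/- Let K be a field and c ∈ K* not a root of unity. Let A = K⟨γ^{±1}, t^{±1}⟩/(γt − ctγ) be the quantum torus. Then the A-module M = A/A(γ − t + 1) is irreducible but is not isomorphic to A ⊗_B N for any module N over the subalgebra B generated by γ^p and t (p ≥ 2 prime); consequently the corresponding representation of the integral Heisenberg group is irreducible but not finitely induced from any proper subgroup. -/

import Mathlib

open Polynomial

namespace Stmt15


/-! ### Group commutation lemma -/

section Group
variable {G : Type*} [Group G] (u v z : G) (hz : ∀ g : G, Commute z g)
  (h : u * v = z * (v * u))

include hz h in
theorem inv_comm : u⁻¹ * v = z⁻¹ * (v * u⁻¹) := by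
  have key : v * u⁻¹ = u⁻¹ * z * v := by
    calc v * u⁻¹ = u⁻¹ * (u * v) * u⁻¹ := by group
      _ = u⁻¹ * (z * (v * u)) * u⁻¹ := by rw [h]
      _ = u⁻¹ * z * v := by group
  symm
  calc z⁻¹ * (v * u⁻¹) = z⁻¹ * (u⁻¹ * z * v) := by rw [key]
    _ = z⁻¹ * (z * u⁻¹ * v) := by rw [← (hz u⁻¹).eq]
    _ = u⁻¹ * v := by group

include hz h in
theorem zpow_comm_one (a : ℤ) : u ^ a * v = z ^ a * (v * u ^ a) := by
  induction a using Int.induction_on with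
  | zero => simp
  | succ k ih =>
      calc u ^ ((k : ℤ) + 1) * v = u ^ (k : ℤ) * (u * v) := by group
        _ = u ^ (k : ℤ) * (z * (v * u)) := by rw [h]
        _ = u ^ (k : ℤ) * z * (v * u) := by group
        _ = z * u ^ (k : ℤ) * (v * u) := by rw [← (hz (u ^ (k : ℤ))).eq]
        _ = z * (u ^ (k : ℤ) * v) * u := by group
        _ = z * (z ^ (k : ℤ) * (v * u ^ (k : ℤ))) * u := by rw [ih]
        _ = z ^ ((k : ℤ) + 1) * (v * u ^ ((k : ℤ) + 1)) := by group
  | pred k ih =>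
      have hinv := inv_comm u v z hz h
      calc u ^ (-(k : ℤ) - 1) * v = u ^ (-(k : ℤ)) * (u⁻¹ * v) := by group
        _ = u ^ (-(k : ℤ)) * (z⁻¹ * (v * u⁻¹)) := by rw [hinv]
        _ = u ^ (-(k : ℤ)) * z⁻¹ * (v * u⁻¹) := by group
        _ = z⁻¹ * u ^ (-(k : ℤ)) * (v * u⁻¹) := by
            rw [← ((hz (u ^ (-(k : ℤ)))).inv_left).eq]
        _ = z⁻¹ * (u ^ (-(k : ℤ)) * v) * u⁻¹ := by group
        _ = z⁻¹ * (z ^ (-(k : ℤ)) * (v * u ^ (-(k : ℤ)))) * u⁻¹ := by rw [ih]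
        _ = z ^ (-(k : ℤ) - 1) * (v * u ^ (-(k : ℤ) - 1)) := by group

include hz h in
theorem zpow_comm (a b : ℤ) : u ^ a * v ^ b = z ^ (a * b) * (v ^ b * u ^ a) := by
  have h1 := zpow_comm_one u v z hz h a
  have hinv : u ^ a * v⁻¹ = z ^ (-a) * (v⁻¹ * u ^ a) := by
    have key : v⁻¹ * u ^ a = z ^ a * u ^ a * v⁻¹ := by
      calc v⁻¹ * u ^ a = v⁻¹ * (u ^ a * v) * v⁻¹ := by group
        _ = v⁻¹ * (z ^ a * (v * u ^ a)) * v⁻¹ := by rw [h1]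
        _ = v⁻¹ * z ^ a * v * u ^ a * v⁻¹ := by group
        _ = z ^ a * v⁻¹ * v * u ^ a * v⁻¹ := by rw [← ((hz v⁻¹).zpow_left a).eq]
        _ = z ^ a * u ^ a * v⁻¹ := by group
    symm
    calc z ^ (-a) * (v⁻¹ * u ^ a) = z ^ (-a) * (z ^ a * u ^ a * v⁻¹) := by rw [key]
      _ = u ^ a * v⁻¹ := by group
  induction b using Int.induction_on with
  | zero => simp
  | succ k ih =>
      calc u ^ a * v ^ ((k : ℤ) + 1) = (u ^ a * v ^ (k : ℤ)) * v := by group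
        _ = z ^ (a * k) * (v ^ (k : ℤ) * u ^ a) * v := by rw [ih]
        _ = z ^ (a * k) * v ^ (k : ℤ) * (u ^ a * v) := by group
        _ = z ^ (a * k) * v ^ (k : ℤ) * (z ^ a * (v * u ^ a)) := by rw [h1]
        _ = z ^ (a * k) * (v ^ (k : ℤ) * z ^ a) * (v * u ^ a) := by group
        _ = z ^ (a * k) * (z ^ a * v ^ (k : ℤ)) * (v * u ^ a) := by
            rw [((hz (v ^ (k : ℤ))).zpow_left a).eq]
        _ = z ^ (a * k) * z ^ a * (v ^ ((k : ℤ) + 1) * u ^ a) := by group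
        _ = z ^ (a * ((k : ℤ) + 1)) * (v ^ ((k : ℤ) + 1) * u ^ a) := by
            rw [← zpow_add]; ring_nf
  | pred k ih =>
      calc u ^ a * v ^ (-(k : ℤ) - 1) = (u ^ a * v ^ (-(k : ℤ))) * v⁻¹ := by group
        _ = z ^ (a * (-(k : ℤ))) * (v ^ (-(k : ℤ)) * u ^ a) * v⁻¹ := by rw [ih]
        _ = z ^ (a * (-(k : ℤ))) * v ^ (-(k : ℤ)) * (u ^ a * v⁻¹) := by group
        _ = z ^ (a * (-(k : ℤ))) * v ^ (-(k : ℤ)) * (z ^ (-a) * (v⁻¹ * u ^ a)) := by rw [hinv]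
        _ = z ^ (a * (-(k : ℤ))) * (v ^ (-(k : ℤ)) * z ^ (-a)) * (v⁻¹ * u ^ a) := by group
        _ = z ^ (a * (-(k : ℤ))) * (z ^ (-a) * v ^ (-(k : ℤ))) * (v⁻¹ * u ^ a) := by
            rw [((hz (v ^ (-(k : ℤ)))).zpow_left (-a)).eq]
        _ = z ^ (a * (-(k : ℤ))) * z ^ (-a) * (v ^ (-(k : ℤ) - 1) * u ^ a) := by group
        _ = z ^ (a * (-(k : ℤ) - 1)) * (v ^ (-(k : ℤ) - 1) * u ^ a) := by
            rw [← zpow_add]; ring_nf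

end Group



noncomputable section RatFuncSide

variable {K : Type} [Field K]

/-- Substitution `X ↦ c·X` on polynomials. -/
def cmp (c : K) : K[X] →ₐ[K] K[X] := aeval (C c * X)

theorem cmp_C (c a : K) : cmp c (C a) = C a := by simp [cmp]

theorem cmp_X (c : K) : cmp c X = C c * X := by simp [cmp]

theorem cmp_cmp (c c' : K) (p : K[X]) : cmp c' (cmp c p) = cmp (c * c') p := by
  have h := (Polynomial.aeval_algHom_apply (cmp c') (C c * X) p).symm
  have h2 : cmp c' (C c * X) = C (c * c') * X := by
    rw [map_mul, cmp_C, cmp_X, ← mul_assoc, ← C_mul]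
  calc cmp c' (cmp c p) = aeval (cmp c' (C c * X)) p := h
    _ = cmp (c * c') p := by rw [h2]; rfl

theorem cmp_one (p : K[X]) : cmp (1 : K) p = p := by
  have : C (1 : K) * X = X := by simp
  rw [cmp, this, Polynomial.aeval_X_left_apply]

theorem cmp_coeff (c : K) (p : K[X]) (n : ℕ) : (cmp c p).coeff n = c ^ n * p.coeff n := by
  induction p using Polynomial.induction_on' with
  | add p q hp hq => simp [map_add, hp, hq, mul_add]
  | monomial d a =>
      rw [cmp, aeval_monomial]
      rw [mul_pow, ← C_pow, algebraMap_eq]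
      rw [← mul_assoc, ← map_mul, coeff_C_mul, coeff_X_pow, coeff_monomial]
      by_cases hd : n = d
      · subst hd; simp [mul_comm]
      · rw [if_neg hd, if_neg (fun hh => hd hh.symm)]
        simp

theorem cmp_injective {c : K} (hc : c ≠ 0) : Function.Injective (cmp c) := by
  intro p q hpq
  have := congrArg (cmp c⁻¹) hpq
  rwa [cmp_cmp, cmp_cmp, mul_inv_cancel₀ hc, cmp_one, cmp_one] at this

theorem cmp_eval (c : K) (p : K[X]) (x : K) : (cmp c p).eval x = p.eval (c * x) := by
  induction p using Polynomial.induction_on' with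
  | add p q hp hq => simp [hp, hq]
  | monomial d a => rw [cmp, aeval_monomial]; simp [algebraMap_eq, mul_pow]

theorem cmp_ne_zero {c : K} (hc : c ≠ 0) {p : K[X]} (hp : p ≠ 0) : cmp c p ≠ 0 := by
  intro h
  exact hp (cmp_injective hc (by rw [h, map_zero]))

theorem cmp_natDegree {c : K} (hc : c ≠ 0) (p : K[X]) : (cmp c p).natDegree = p.natDegree := by
  have hcomp : cmp c p = p.comp (C c * X) := by
    rw [cmp, aeval_def, comp, algebraMap_eq]
  rw [hcomp, natDegree_comp, natDegree_C_mul_X c hc, mul_one]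

/-- The scaling `X ↦ c·X` on rational functions. -/
def sc (c : K) (hc : c ≠ 0) : RatFunc K →ₐ[K] RatFunc K :=
  RatFunc.liftAlgHom ((IsScalarTower.toAlgHom K K[X] (RatFunc K)).comp (cmp c))
    (nonZeroDivisors_le_comap_nonZeroDivisors_of_injective _
      ((IsFractionRing.injective K[X] (RatFunc K)).comp (cmp_injective hc)))

theorem sc_alg (c : K) (hc : c ≠ 0) (p : K[X]) :
    sc c hc (algebraMap K[X] (RatFunc K) p) = algebraMap K[X] (RatFunc K) (cmp c p) := by
  have h := RatFunc.liftAlgHom_apply_div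
    ((IsScalarTower.toAlgHom K K[X] (RatFunc K)).comp (cmp c))
    (nonZeroDivisors_le_comap_nonZeroDivisors_of_injective _
      ((IsFractionRing.injective K[X] (RatFunc K)).comp (cmp_injective hc))) p 1
  simpa [sc] using h

theorem sc_sc (c c' : K) (hc : c ≠ 0) (hc' : c' ≠ 0) (f : RatFunc K) :
    sc c' hc' (sc c hc f) = sc (c * c') (mul_ne_zero hc hc') f := by
  rw [← RatFunc.num_div_denom f, map_div₀, map_div₀, sc_alg, sc_alg, map_div₀, sc_alg, sc_alg,
    cmp_cmp, cmp_cmp, sc_alg, sc_alg]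

theorem sc_one (hc : (1 : K) ≠ 0) (f : RatFunc K) : sc 1 hc f = f := by
  rw [← RatFunc.num_div_denom f, map_div₀, sc_alg, sc_alg, cmp_one, cmp_one,
    RatFunc.num_div_denom]

theorem sc_congr {c₁ c₂ : K} (h : c₁ = c₂) (h₁ : c₁ ≠ 0) (h₂ : c₂ ≠ 0) (f : RatFunc K) :
    sc c₁ h₁ f = sc c₂ h₂ f := by subst h; rfl

theorem sc_sc_self {c : K} (hc : c ≠ 0) (f : RatFunc K) :
    sc c⁻¹ (inv_ne_zero hc) (sc c hc f) = f := by
  rw [sc_sc, sc_congr (mul_inv_cancel₀ hc) _ one_ne_zero, sc_one]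

theorem sc_sc_self' {c : K} (hc : c ≠ 0) (f : RatFunc K) :
    sc c hc (sc c⁻¹ (inv_ne_zero hc) f) = f := by
  rw [sc_sc, sc_congr (inv_mul_cancel₀ hc) _ one_ne_zero, sc_one]

/-! ### Operators on rational functions -/


abbrev EE (K : Type) [Field K] := Module.End K (RatFunc K)

variable (c : K) (hc : c ≠ 0)

def mulU : (RatFunc K)ˣ →* (EE K)ˣ :=
  Units.map (Algebra.lmul K (RatFunc K)).toRingHom.toMonoidHom

theorem mulU_apply (u : (RatFunc K)ˣ) (f : RatFunc K) :
    ((mulU u : (EE K)ˣ) : EE K) f = (u : RatFunc K) * f := rfl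

theorem mulU_zpow_apply (u : (RatFunc K)ˣ) (m : ℤ) (f : RatFunc K) :
    ((mulU u ^ m : (EE K)ˣ) : EE K) f = ((u : RatFunc K) ^ m) * f := by
  rw [← map_zpow]
  show ((u ^ m : (RatFunc K)ˣ) : RatFunc K) * f = _
  rw [Units.val_zpow_eq_zpow_val]

def xUnit : (RatFunc K)ˣ := Units.mk0 RatFunc.X RatFunc.X_ne_zero

theorem x1_eq : (RatFunc.X - 1 : RatFunc K) = algebraMap K[X] (RatFunc K) (X - 1) := by
  rw [map_sub, RatFunc.algebraMap_X, map_one]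

theorem x1_ne_zero : (RatFunc.X - 1 : RatFunc K) ≠ 0 := by
  rw [x1_eq]
  apply RatFunc.algebraMap_ne_zero
  intro h
  have := congrArg (Polynomial.eval (0 : K)) h
  simp at this

def x1Unit : (RatFunc K)ˣ := Units.mk0 (RatFunc.X - 1) x1_ne_zero

def sU : (EE K)ˣ where
  val := (sc c hc).toLinearMap
  inv := (sc c⁻¹ (inv_ne_zero hc)).toLinearMap
  val_inv := by ext f; exact sc_sc_self' hc f
  inv_val := by ext f; exact sc_sc_self hc f

theorem sU_apply (f : RatFunc K) : ((sU c hc : (EE K)ˣ) : EE K) f = sc c hc f := rfl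

theorem sU_inv_apply (f : RatFunc K) :
    (((sU c hc)⁻¹ : (EE K)ˣ) : EE K) f = sc c⁻¹ (inv_ne_zero hc) f := rfl

def zUnit : (EE K)ˣ := Units.map (algebraMap K (EE K)).toMonoidHom (Units.mk0 c hc)

theorem zUnit_apply (f : RatFunc K) :
    ((zUnit c hc : (EE K)ˣ) : EE K) f = c • f := by
  show algebraMap K (EE K) c f = c • f
  rw [Module.algebraMap_end_apply]

theorem zUnit_commute (g : (EE K)ˣ) : Commute (zUnit c hc) g := by
  show _ * _ = _ * _
  apply Units.ext
  show algebraMap K (EE K) c * (g : EE K) = (g : EE K) * algebraMap K (EE K) c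
  exact Algebra.commutes c _

theorem zUnit_zpow_apply (m : ℤ) (f : RatFunc K) :
    ((zUnit c hc ^ m : (EE K)ˣ) : EE K) f = ((Units.mk0 c hc ^ m : Kˣ) : K) • f := by
  rw [zUnit, ← map_zpow]
  show algebraMap K (EE K) ((Units.mk0 c hc ^ m : Kˣ) : K) f = _
  rw [Module.algebraMap_end_apply]

def gU : (EE K)ˣ := mulU (x1Unit) * sU c hc

theorem gU_apply (f : RatFunc K) :
    ((gU c hc : (EE K)ˣ) : EE K) f = (RatFunc.X - 1) * sc c hc f := rfl

theorem gU_inv_apply (f : RatFunc K) :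
    (((gU c hc)⁻¹ : (EE K)ˣ) : EE K) f
      = sc c⁻¹ (inv_ne_zero hc) ((RatFunc.X - 1)⁻¹ * f) := by
  rw [gU, mul_inv_rev]
  show (((sU c hc)⁻¹ : (EE K)ˣ) : EE K) ((((mulU x1Unit)⁻¹ : (EE K)ˣ) : EE K) f) = _
  rw [← map_inv, sU_inv_apply, mulU_apply,
    show ((x1Unit⁻¹ : (RatFunc K)ˣ) : RatFunc K) = (RatFunc.X - 1)⁻¹ from by simp [x1Unit]]

theorem sc_X : sc c hc (RatFunc.X) = algebraMap K (RatFunc K) c * RatFunc.X := by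
  rw [← RatFunc.algebraMap_X, sc_alg, cmp_X, map_mul, RatFunc.algebraMap_X,
    IsScalarTower.algebraMap_apply K K[X] (RatFunc K), algebraMap_eq]

theorem key_relation :
    gU c hc * mulU xUnit = zUnit c hc * (mulU xUnit * gU c hc) := by
  apply Units.ext
  apply LinearMap.ext
  intro f
  show ((gU c hc : (EE K)ˣ) : EE K) (((mulU xUnit : (EE K)ˣ) : EE K) f)
      = ((zUnit c hc : (EE K)ˣ) : EE K)
          (((mulU xUnit : (EE K)ˣ) : EE K) (((gU c hc : (EE K)ˣ) : EE K) f))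
  rw [gU_apply, mulU_apply, mulU_apply, zUnit_apply, gU_apply]
  show (RatFunc.X - 1) * sc c hc (RatFunc.X * f) = c • (RatFunc.X * ((RatFunc.X - 1) * sc c hc f))
  rw [map_mul, sc_X, Algebra.smul_def]
  ring

/-! ### The denominators -/

def dpoly (n : ℕ) : K[X] := ∏ m ∈ Finset.range n, (C (c⁻¹ ^ (m + 1)) * X - 1)

theorem dfactor_ne_zero (a : K) : (C a * X - 1 : K[X]) ≠ 0 := by
  intro h
  have := congrArg (Polynomial.eval (0 : K)) h
  simp at this

theorem dpoly_ne_zero (n : ℕ) : dpoly c n ≠ 0 := by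
  apply Finset.prod_ne_zero_iff.mpr
  intro m _
  exact dfactor_ne_zero _

theorem cmp_dfactor (a : K) : cmp c⁻¹ (C a * X - 1) = C (a * c⁻¹) * X - 1 := by
  rw [map_sub, map_mul, cmp_C, cmp_X, map_one, ← mul_assoc, ← C_mul]

theorem cmp_dpoly (n : ℕ) :
    cmp c⁻¹ (dpoly c n) = ∏ m ∈ Finset.range n, (C (c⁻¹ ^ (m + 2)) * X - 1) := by
  rw [dpoly, map_prod]
  apply Finset.prod_congr rfl
  intro m _
  rw [cmp_dfactor, ← pow_succ]

theorem gU_zpow_neg_apply_one (k : ℕ) :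
    ((gU c hc ^ (-(k : ℤ)) : (EE K)ˣ) : EE K) 1
      = (algebraMap K[X] (RatFunc K) (dpoly c k))⁻¹ := by
  induction k with
  | zero => simp [dpoly]
  | succ k ih =>
      have hz : (-(k + 1 : ℕ) : ℤ) = -1 + (-(k : ℤ)) := by push_cast; ring
      rw [hz, zpow_add, zpow_neg_one]
      show (((gU c hc)⁻¹ : (EE K)ˣ) : EE K) (((gU c hc ^ (-(k:ℤ)) : (EE K)ˣ) : EE K) 1) = _
      rw [ih, gU_inv_apply, x1_eq]
      have key : cmp c⁻¹ ((X - 1) * dpoly c k) = dpoly c (k + 1) := by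
        rw [map_mul, cmp_dpoly, dpoly, Finset.prod_range_succ']
        have h1 : cmp c⁻¹ (X - 1 : K[X]) = C (c⁻¹ ^ (0 + 1)) * X - 1 := by
          rw [map_sub, cmp_X, map_one, pow_one]
        rw [h1, mul_comm]
      rw [← mul_inv, ← map_mul, map_inv₀, sc_alg, key]


/-! ### Linear independence of the spanning family -/

def vfam : (ℤ ⊕ ℕ) → RatFunc K :=
  Sum.elim (fun j => (RatFunc.X : RatFunc K) ^ j)
    (fun k => (algebraMap K[X] (RatFunc K) (dpoly c (k + 1)))⁻¹)

section Indep

variable (hroot : ∀ n : ℕ, 0 < n → c ^ n ≠ 1)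

include hroot in
theorem cpow_inj (hc : c ≠ 0) {i j : ℕ} (h : c ^ i = c ^ j) : i = j := by
  rcases Nat.lt_trichotomy i j with hij | hij | hij
  · exfalso
    have key : c ^ i * c ^ (j - i) = c ^ i * 1 := by
      rw [mul_one, ← pow_add, show i + (j - i) = j by omega]
      exact h.symm
    have h2 := mul_left_cancel₀ (pow_ne_zero i hc) key
    exact hroot (j - i) (by omega) h2
  · exact hij
  · exfalso
    have key : c ^ j * c ^ (i - j) = c ^ j * 1 := by
      rw [mul_one, ← pow_add, show j + (i - j) = i by omega]
      exact h
    have h2 := mul_left_cancel₀ (pow_ne_zero j hc) key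
    exact hroot (i - j) (by omega) h2

include hroot in
theorem factor_eval_ne_zero (hc : c ≠ 0) {m k : ℕ} (hmk : m ≠ k) :
    c⁻¹ ^ (m + 1) * c ^ (k + 1) - 1 ≠ 0 := by
  intro h
  have h1 : c⁻¹ ^ (m + 1) * c ^ (k + 1) = 1 := by linear_combination h
  have h2 : c ^ (k + 1) = c ^ (m + 1) := by
    have := congrArg (fun x => c ^ (m + 1) * x) h1
    simp only [mul_one] at this
    rw [← this, inv_pow, ← mul_assoc, mul_inv_cancel₀ (pow_ne_zero _ hc), one_mul]
  have := cpow_inj c hroot hc h2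
  omega

theorem factor_eval_zero (hc : c ≠ 0) (k : ℕ) :
    c⁻¹ ^ (k + 1) * c ^ (k + 1) - 1 = 0 := by
  rw [inv_pow, inv_mul_cancel₀ (pow_ne_zero _ hc), sub_self]

theorem dfactor_eval (a x : K) : (C a * X - 1 : K[X]).eval x = a * x - 1 := by simp

include hroot in
theorem vfam_indep (hc : c ≠ 0) : LinearIndependent K (vfam c) := by
  rw [linearIndependent_iff']
  intro s g hsum
  classical
  set n : ℕ := s.sup (Sum.elim (fun _ => 0) (fun k => k + 1)) with hn
  have hkn : ∀ k : ℕ, Sum.inr k ∈ s → k < n := by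
    intro k hk
    have h := Finset.le_sup (f := Sum.elim (fun (_ : ℤ) => 0) (fun k => k + 1)) hk
    simp only [Sum.elim_inr] at h
    omega
  set Mex : ℕ := s.sup (Sum.elim (fun j => (-j).toNat) (fun _ => 0)) with hMex
  have hjM : ∀ j : ℤ, Sum.inl j ∈ s → 0 ≤ (Mex : ℤ) + j := by
    intro j hj
    have := Finset.le_sup (f := Sum.elim (fun j : ℤ => (-j).toNat) (fun (_ : ℕ) => 0)) hj
    simp only [Sum.elim_inl] at this
    have h2 : (-j : ℤ) ≤ ((-j).toNat : ℤ) := Int.self_le_toNat _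
    have h3 : (((-j).toNat : ℤ)) ≤ (Mex : ℤ) := by exact_mod_cast this
    omega
  set P : (ℤ ⊕ ℕ) → K[X] := Sum.elim
      (fun j => X ^ ((Mex : ℤ) + j).toNat * dpoly c n)
      (fun k => X ^ Mex * ∏ m ∈ Finset.Ico (k + 1) n, (C (c⁻¹ ^ (m + 1)) * X - 1)) with hP
  have algne : ∀ p : K[X], p ≠ 0 → algebraMap K[X] (RatFunc K) p ≠ 0 :=
    fun p hp => RatFunc.algebraMap_ne_zero hp
  -- Step 1: pointwise identity
  have step1 : ∀ i ∈ s, algebraMap K[X] (RatFunc K) (P i)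
      = algebraMap K[X] (RatFunc K) (X ^ Mex * dpoly c n) * vfam c i := by
    rintro (j | k) hi
    · have h0 : (((Mex : ℤ) + j).toNat : ℤ) = (Mex : ℤ) + j := Int.toNat_of_nonneg (hjM j hi)
      simp only [hP, Sum.elim_inl, vfam, map_mul, map_pow, RatFunc.algebraMap_X]
      rw [← zpow_natCast (RatFunc.X : RatFunc K) (((Mex : ℤ) + j).toNat), h0,
        zpow_add₀ RatFunc.X_ne_zero, ← zpow_natCast (RatFunc.X : RatFunc K) Mex]
      ring
    · have hkn' := hkn k hi
      have hsplit : dpoly c n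
          = dpoly c (k + 1) * ∏ m ∈ Finset.Ico (k + 1) n, (C (c⁻¹ ^ (m + 1)) * X - 1) := by
        rw [dpoly, dpoly, Finset.range_eq_Ico, Finset.range_eq_Ico]
        exact (Finset.prod_Ico_consecutive (fun m => (C (c⁻¹ ^ (m + 1)) * X - 1 : K[X])) (Nat.zero_le (k + 1)) (by omega : k + 1 ≤ n)).symm
      simp only [hP, Sum.elim_inr, vfam, map_mul, map_pow, RatFunc.algebraMap_X]
      rw [hsplit, map_mul, mul_assoc, mul_assoc]
      congr 1
      rw [mul_comm, mul_assoc, inv_mul_cancel₀ (algne _ (dpoly_ne_zero c (k + 1))), mul_one]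
      congr 1
      exact Finset.prod_congr rfl fun m _ => by rw [C_pow]
  -- Step 2: the polynomial identity
  have step2 : (∑ i ∈ s, g i • P i) = 0 := by
    apply IsFractionRing.injective K[X] (RatFunc K)
    rw [map_zero]
    have : ((IsScalarTower.toAlgHom K K[X] (RatFunc K)).toLinearMap) (∑ i ∈ s, g i • P i)
        = ∑ i ∈ s, g i • ((IsScalarTower.toAlgHom K K[X] (RatFunc K)).toLinearMap (P i)) := by
      rw [map_sum]
      exact Finset.sum_congr rfl fun i _ => by rw [map_smul]
    show ((IsScalarTower.toAlgHom K K[X] (RatFunc K)).toLinearMap) (∑ i ∈ s, g i • P i) = 0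
    rw [this]
    have : ∀ i ∈ s, g i • ((IsScalarTower.toAlgHom K K[X] (RatFunc K)).toLinearMap (P i))
        = algebraMap K[X] (RatFunc K) (X ^ Mex * dpoly c n) * (g i • vfam c i) := by
      intro i hi
      show g i • (algebraMap K[X] (RatFunc K) (P i)) = _
      rw [step1 i hi, mul_smul_comm]
    rw [Finset.sum_congr rfl this, ← Finset.mul_sum, hsum, mul_zero]
  -- Step 3: the pole coefficients vanish
  have evaldn : ∀ k : ℕ, k < n → (dpoly c n).eval (c ^ (k + 1)) = 0 := by
    intro k hk
    rw [dpoly, Polynomial.eval_prod]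
    apply Finset.prod_eq_zero (Finset.mem_range.mpr hk)
    rw [dfactor_eval]
    exact factor_eval_zero c hc k
  have step3 : ∀ k : ℕ, Sum.inr k ∈ s → g (Sum.inr k) = 0 := by
    have main : ∀ d k, n ≤ k + d → Sum.inr k ∈ s → g (Sum.inr k) = 0 := by
      intro d
      induction d with
      | zero => intro k hkd hk; exact absurd (hkn k hk) (by omega)
      | succ d ih =>
          intro k hkd hk
          by_cases hklt : n ≤ k
          · exact absurd (hkn k hk) (by omega)
          push_neg at hklt
          have heval := congrArg (Polynomial.eval (c ^ (k + 1))) step2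
          rw [Polynomial.eval_finset_sum, Polynomial.eval_zero] at heval
          rw [Finset.sum_eq_single_of_mem (Sum.inr k) hk] at heval
          · have h1 : (g (Sum.inr k) • P (Sum.inr k)).eval (c ^ (k + 1))
                = g (Sum.inr k) * ((c ^ (k + 1)) ^ Mex *
                    ∏ m ∈ Finset.Ico (k + 1) n, (c⁻¹ ^ (m + 1) * c ^ (k + 1) - 1)) := by
              rw [Polynomial.smul_eq_C_mul, Polynomial.eval_mul, Polynomial.eval_C]
              congr 1
              simp only [hP, Sum.elim_inr, Polynomial.eval_mul, Polynomial.eval_pow,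
                Polynomial.eval_X, Polynomial.eval_prod]
              congr 1
              exact Finset.prod_congr rfl fun m _ => dfactor_eval _ _
            rw [h1] at heval
            have h2 : ((c ^ (k + 1)) ^ Mex *
                ∏ m ∈ Finset.Ico (k + 1) n, (c⁻¹ ^ (m + 1) * c ^ (k + 1) - 1)) ≠ 0 := by
              apply mul_ne_zero (pow_ne_zero _ (pow_ne_zero _ hc))
              apply Finset.prod_ne_zero_iff.mpr
              intro m hm
              have : k + 1 ≤ m := (Finset.mem_Ico.mp hm).1
              exact factor_eval_ne_zero c hroot hc (by omega : m ≠ k)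
            exact (mul_eq_zero.mp heval).resolve_right h2
          · rintro (j | k') hi hne
            · rw [Polynomial.smul_eq_C_mul, Polynomial.eval_mul]
              simp only [hP, Sum.elim_inl, Polynomial.eval_mul]
              rw [evaldn k hklt]
              ring
            · rcases Nat.lt_trichotomy k' k with hlt | heq | hgt
              · rw [Polynomial.smul_eq_C_mul, Polynomial.eval_mul]
                simp only [hP, Sum.elim_inr, Polynomial.eval_mul, Polynomial.eval_prod]
                have hkmem : k ∈ Finset.Ico (k' + 1) n := Finset.mem_Ico.mpr ⟨by omega, hklt⟩
                rw [Finset.prod_eq_zero hkmem (by rw [dfactor_eval]; exact factor_eval_zero c hc k)]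
                ring
              · exact absurd (by rw [heq]) hne
              · rw [ih k' (by omega) hi, zero_smul, Polynomial.eval_zero]
    exact fun k hk => main n k (by omega) hk
  -- Step 4: the Laurent coefficients vanish
  set Q : (ℤ ⊕ ℕ) → K[X] := Sum.elim (fun j => X ^ ((Mex : ℤ) + j).toNat) (fun _ => 0) with hQ
  have hfac : (∑ i ∈ s, g i • Q i) * dpoly c n = 0 := by
    rw [← step2, Finset.sum_mul]
    apply Finset.sum_congr rfl
    rintro (j | k) hi
    · rw [smul_mul_assoc]
      simp only [hQ, hP, Sum.elim_inl]
    · rw [step3 k hi, zero_smul, zero_smul, zero_mul]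
  have hQ0 : (∑ i ∈ s, g i • Q i) = 0 :=
    (mul_eq_zero.mp hfac).resolve_right (dpoly_ne_zero c n)
  have step4 : ∀ j : ℤ, Sum.inl j ∈ s → g (Sum.inl j) = 0 := by
    intro j hj
    have hco := congrArg (fun p => Polynomial.coeff p (((Mex : ℤ) + j).toNat)) hQ0
    simp only [Polynomial.finset_sum_coeff, Polynomial.coeff_smul, Polynomial.coeff_zero] at hco
    rw [Finset.sum_eq_single_of_mem (Sum.inl j) hj] at hco
    · have hone : (Q (Sum.inl j)).coeff (((Mex : ℤ) + j).toNat) = 1 := by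
        simp [hQ, Polynomial.coeff_X_pow]
      rw [hone, smul_eq_mul, mul_one] at hco
      exact hco
    · rintro (j' | k') hi hne
      · simp only [hQ, Sum.elim_inl, Polynomial.coeff_X_pow, smul_eq_mul]
        rw [if_neg, mul_zero]
        intro hcontra
        apply hne
        have e1 : (((Mex : ℤ) + j').toNat : ℤ) = (Mex : ℤ) + j' := Int.toNat_of_nonneg (hjM j' hi)
        have e2 : (((Mex : ℤ) + j).toNat : ℤ) = (Mex : ℤ) + j := Int.toNat_of_nonneg (hjM j hj)
        have : j' = j := by
          have := congrArg (fun x : ℕ => (x : ℤ)) hcontra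
          simp only [e1, e2] at this
          omega
        rw [this]
      · simp [hQ]
  rintro (j | k) hi
  · exact step4 j hi
  · exact step3 k hi

end Indep

/-! ### The algebra side -/

section AlgebraSide

variable {A : Type} [Ring A] [Algebra K A] (γ t : Aˣ)

def zA : Aˣ := Units.map (algebraMap K A).toMonoidHom (Units.mk0 c hc)

theorem zA_commute (g : Aˣ) : Commute (zA c hc) g := by
  show _ * _ = _ * _
  apply Units.ext
  show algebraMap K A c * (g : A) = (g : A) * algebraMap K A c
  exact Algebra.commutes c _

theorem zA_val : ((zA c hc : Aˣ) : A) = algebraMap K A c := rfl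

theorem zA_zpow_val (m : ℤ) :
    ((zA c hc ^ m : Aˣ) : A) = algebraMap K A (c ^ m) := by
  rw [zA, ← map_zpow]
  show algebraMap K A ((Units.mk0 c hc ^ m : Kˣ) : K) = _
  rw [Units.val_zpow_eq_zpow_val]
  rfl

variable (hrel : (γ : A) * t = algebraMap K A c * ((t : A) * γ))

include hrel in
theorem relA : t * γ = (zA c hc)⁻¹ * (γ * t) := by
  have h1 : γ * t = zA c hc * (t * γ) := by
    apply Units.ext
    show ((γ * t : Aˣ) : A) = ((zA c hc * (t * γ) : Aˣ) : A)
    rw [Units.val_mul, Units.val_mul, Units.val_mul, zA_val]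
    exact hrel
  calc t * γ = (zA c hc)⁻¹ * (zA c hc * (t * γ)) := by group
    _ = (zA c hc)⁻¹ * (γ * t) := by rw [← h1]

variable (b : Module.Basis (ℤ × ℤ) K A)
  (hb : ∀ i j : ℤ, b (i, j) = ((γ ^ i : Aˣ) : A) * ((t ^ j : Aˣ) : A))

include hc hrel hb in
theorem bmul (i j k l : ℤ) :
    b (i, j) * b (k, l) = c ^ (-(j * k)) • b (i + k, j + l) := by
  have hcomm := zpow_comm (t) (γ) ((zA c hc)⁻¹)
    (fun g => (zA_commute c hc g).inv_left) (relA c hc γ t hrel) j k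
  have huval : (γ ^ i * t ^ j) * (γ ^ k * t ^ l)
      = (zA c hc) ^ (-(j * k)) * (γ ^ (i + k) * t ^ (j + l)) := by
    calc (γ ^ i * t ^ j) * (γ ^ k * t ^ l)
        = γ ^ i * (t ^ j * γ ^ k) * t ^ l := by group
      _ = γ ^ i * (((zA c hc)⁻¹) ^ (j * k) * (γ ^ k * t ^ j)) * t ^ l := by rw [hcomm]
      _ = (γ ^ i * ((zA c hc)⁻¹) ^ (j * k)) * (γ ^ k * t ^ j) * t ^ l := by group
      _ = (((zA c hc)⁻¹) ^ (j * k) * γ ^ i) * (γ ^ k * t ^ j) * t ^ l := by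
          rw [(((zA_commute c hc (γ ^ i)).inv_left.zpow_left (j * k)).eq).symm]
      _ = (zA c hc) ^ (-(j * k)) * (γ ^ (i + k) * t ^ (j + l)) := by
          rw [inv_zpow, ← zpow_neg]
          group
  rw [hb i j, hb k l, hb (i + k) (j + l)]
  calc ((γ ^ i : Aˣ) : A) * ((t ^ j : Aˣ) : A) * (((γ ^ k : Aˣ) : A) * ((t ^ l : Aˣ) : A))
      = (((γ ^ i * t ^ j) * (γ ^ k * t ^ l) : Aˣ) : A) := by
        simp only [Units.val_mul]
    _ = (((zA c hc) ^ (-(j * k)) * (γ ^ (i + k) * t ^ (j + l)) : Aˣ) : A) := by rw [huval]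
    _ = c ^ (-(j * k)) • (((γ ^ (i + k) : Aˣ) : A) * ((t ^ (j + l) : Aˣ) : A)) := by
        simp only [Units.val_mul]
        rw [zA_zpow_val, ← Algebra.smul_def]

include hb in
theorem b_zero_zero : b (0, 0) = 1 := by
  rw [hb 0 0]; simp

include hb in
theorem b_gamma : b (1, 0) = (γ : A) := by
  rw [hb 1 0]; simp

include hb in
theorem b_t : b (0, 1) = (t : A) := by
  rw [hb 0 1]; simp

/-- The representation of `A` on rational functions. -/
noncomputable def Phi : A →ₗ[K] EE K :=
  b.constr K (fun p => ((gU c hc ^ p.1 * mulU xUnit ^ p.2 : (EE K)ˣ) : EE K))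

theorem Phi_basis (i j : ℤ) :
    Phi c hc b (b (i, j)) = ((gU c hc ^ i * mulU xUnit ^ j : (EE K)ˣ) : EE K) :=
  b.constr_basis K _ _

theorem eu_mul (i j k l : ℤ) :
    ((gU c hc ^ i * mulU xUnit ^ j : (EE K)ˣ) : EE K)
        * ((gU c hc ^ k * mulU xUnit ^ l : (EE K)ˣ) : EE K)
      = c ^ (-(j * k)) • ((gU c hc ^ (i + k) * mulU xUnit ^ (j + l) : (EE K)ˣ) : EE K) := by
  have hrelE : mulU (xUnit : (RatFunc K)ˣ) * gU c hc
      = (zUnit c hc)⁻¹ * (gU c hc * mulU xUnit) := by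
    have h1 := key_relation c hc
    calc mulU (xUnit : (RatFunc K)ˣ) * gU c hc
        = (zUnit c hc)⁻¹ * (zUnit c hc * (mulU xUnit * gU c hc)) := by group
      _ = (zUnit c hc)⁻¹ * (gU c hc * mulU xUnit) := by rw [← h1]
  have hcomm := zpow_comm (mulU (xUnit : (RatFunc K)ˣ)) (gU c hc) ((zUnit c hc)⁻¹)
    (fun g => (zUnit_commute c hc g).inv_left) hrelE j k
  have huval : (gU c hc ^ i * mulU xUnit ^ j) * (gU c hc ^ k * mulU xUnit ^ l)
      = (zUnit c hc) ^ (-(j * k)) * (gU c hc ^ (i + k) * mulU xUnit ^ (j + l)) := by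
    calc (gU c hc ^ i * mulU xUnit ^ j) * (gU c hc ^ k * mulU xUnit ^ l)
        = gU c hc ^ i * (mulU xUnit ^ j * gU c hc ^ k) * mulU xUnit ^ l := by group
      _ = gU c hc ^ i * (((zUnit c hc)⁻¹) ^ (j * k) * (gU c hc ^ k * mulU xUnit ^ j))
            * mulU xUnit ^ l := by rw [hcomm]
      _ = (gU c hc ^ i * ((zUnit c hc)⁻¹) ^ (j * k)) * (gU c hc ^ k * mulU xUnit ^ j)
            * mulU xUnit ^ l := by group
      _ = (((zUnit c hc)⁻¹) ^ (j * k) * gU c hc ^ i) * (gU c hc ^ k * mulU xUnit ^ j)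
            * mulU xUnit ^ l := by
          rw [(((zUnit_commute c hc (gU c hc ^ i)).inv_left.zpow_left (j * k)).eq).symm]
      _ = (zUnit c hc) ^ (-(j * k)) * (gU c hc ^ (i + k) * mulU xUnit ^ (j + l)) := by
          rw [inv_zpow, ← zpow_neg]
          group
  calc ((gU c hc ^ i * mulU xUnit ^ j : (EE K)ˣ) : EE K)
        * ((gU c hc ^ k * mulU xUnit ^ l : (EE K)ˣ) : EE K)
      = (((gU c hc ^ i * mulU xUnit ^ j) * (gU c hc ^ k * mulU xUnit ^ l) : (EE K)ˣ) : EE K) := by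
        simp only [Units.val_mul]
    _ = (((zUnit c hc) ^ (-(j * k)) * (gU c hc ^ (i + k) * mulU xUnit ^ (j + l)) : (EE K)ˣ)
          : EE K) := by rw [huval]
    _ = c ^ (-(j * k)) • ((gU c hc ^ (i + k) * mulU xUnit ^ (j + l) : (EE K)ˣ) : EE K) := by
        simp only [Units.val_mul]
        have : ((zUnit c hc ^ (-(j * k)) : (EE K)ˣ) : EE K) = algebraMap K (EE K) (c ^ (-(j * k))) := by
          rw [zUnit, ← map_zpow]
          show algebraMap K (EE K) ((Units.mk0 c hc ^ (-(j*k)) : Kˣ) : K) = _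
          rw [Units.val_zpow_eq_zpow_val]
          rfl
        rw [this, ← Algebra.smul_def]

include hrel hb in
theorem Phi_mul (x y : A) :
    Phi c hc b (x * y) = Phi c hc b x * Phi c hc b y := by
  have key : ((LinearMap.mul K A).compr₂ (Phi c hc b))
      = (((LinearMap.mul K (EE K)).comp (Phi c hc b)).compl₂ (Phi c hc b)) := by
    apply b.ext
    intro i
    apply b.ext
    intro j
    obtain ⟨i1, i2⟩ := i
    obtain ⟨j1, j2⟩ := j
    show Phi c hc b (b (i1, i2) * b (j1, j2)) = Phi c hc b (b (i1, i2)) * Phi c hc b (b (j1, j2))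
    rw [bmul c hc γ t hrel b hb, map_smul, Phi_basis, Phi_basis, Phi_basis, eu_mul]
  exact DFunLike.congr_fun (DFunLike.congr_fun key x) y

include hb in
theorem Phi_one : Phi c hc b 1 = 1 := by
  rw [← b_zero_zero γ t b hb, Phi_basis]
  simp

/-! ### The cyclic vector map -/

noncomputable def psiA : A →ₗ[K] RatFunc K where
  toFun a := Phi c hc b a 1
  map_add' x y := by simp only [map_add, LinearMap.add_apply]
  map_smul' a x := by simp only [map_smul, LinearMap.smul_apply, RingHom.id_apply]

theorem psiA_apply (a : A) : psiA c hc b a = Phi c hc b a 1 := rfl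

theorem psiA_b0 (j : ℤ) : psiA c hc b (b (0, j)) = (RatFunc.X : RatFunc K) ^ j := by
  rw [psiA_apply, Phi_basis]
  rw [zpow_zero, one_mul, mulU_zpow_apply]
  show (RatFunc.X : RatFunc K) ^ j * 1 = _
  rw [mul_one]

theorem psiA_bneg (k : ℕ) :
    psiA c hc b (b (-((k : ℤ) + 1), 0)) = (algebraMap K[X] (RatFunc K) (dpoly c (k + 1)))⁻¹ := by
  rw [psiA_apply, Phi_basis, zpow_zero, mul_one]
  have : (-((k : ℤ) + 1)) = -((k + 1 : ℕ) : ℤ) := by push_cast; ring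
  rw [this, gU_zpow_neg_apply_one c hc (k + 1)]

theorem psiA_wimg (i : ℤ ⊕ ℕ) :
    psiA c hc b ((Sum.elim (fun j : ℤ => b (0, j)) (fun k : ℕ => b (-((k : ℤ) + 1), 0))) i)
      = vfam c i := by
  rcases i with j | k
  · exact psiA_b0 c hc b j
  · exact psiA_bneg c hc b k

include hrel hb in
theorem psiA_mul_apply (x y : A) :
    psiA c hc b (x * y) = Phi c hc b x (psiA c hc b y) := by
  rw [psiA_apply, Phi_mul c hc γ t hrel b hb, Module.End.mul_apply, psiA_apply]

include hrel hb in
theorem psiA_gen_zero : psiA c hc b ((γ : A) - (t : A) + 1) = 0 := by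
  have h1 : ((γ : A) - (t : A) + 1) = b (1, 0) - b (0, 1) + b (0, 0) := by
    rw [b_gamma γ t b hb, b_t γ t b hb, b_zero_zero γ t b hb]
  rw [h1, psiA_apply, map_add, map_sub, Phi_basis, Phi_basis, Phi_basis]
  simp only [zpow_one, zpow_zero, mul_one, one_mul, Units.val_one]
  rw [LinearMap.add_apply, LinearMap.sub_apply, Module.End.one_apply, gU_apply, mulU_apply,
    map_one, mul_one]
  show RatFunc.X - 1 - ((xUnit : (RatFunc K)ˣ) : RatFunc K) * 1 + (1 : RatFunc K) = 0
  show RatFunc.X - 1 - RatFunc.X * 1 + (1 : RatFunc K) = 0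
  ring

include hrel hb in
theorem psiA_ideal (x : A) : psiA c hc b (x * ((γ : A) - (t : A) + 1)) = 0 := by
  rw [psiA_mul_apply c hc γ t hrel b hb]
  rw [psiA_gen_zero c hc γ t hrel b hb]
  exact map_zero _

/-- Algebra-homomorphism version of `Phi`. -/
noncomputable def PhiAlg (hrel' : (γ : A) * t = algebraMap K A c * ((t : A) * γ))
    (hb' : ∀ i j : ℤ, b (i, j) = ((γ ^ i : Aˣ) : A) * ((t ^ j : Aˣ) : A)) : A →ₐ[K] EE K :=
  AlgHom.ofLinearMap (Phi c hc b) (Phi_one c hc γ t b hb') (Phi_mul c hc γ t hrel' b hb')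

theorem PhiAlg_apply (hrel' : (γ : A) * t = algebraMap K A c * ((t : A) * γ))
    (hb' : ∀ i j : ℤ, b (i, j) = ((γ ^ i : Aˣ) : A) * ((t ^ j : Aˣ) : A)) (x : A) :
    PhiAlg c hc γ t b hrel' hb' x = Phi c hc b x := rfl

include hb in
theorem Phi_t : Phi c hc b ((t : Aˣ) : A) = ((mulU xUnit : (EE K)ˣ) : EE K) := by
  rw [← b_t γ t b hb, Phi_basis]
  rw [zpow_zero, one_mul, zpow_one]

include hb in
theorem Phi_gamma : Phi c hc b ((γ : Aˣ) : A) = ((gU c hc : (EE K)ˣ) : EE K) := by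
  rw [← b_gamma γ t b hb, Phi_basis]
  rw [zpow_zero, mul_one, zpow_one]

include hb in
theorem Phi_gamma_inv :
    Phi c hc b ((γ⁻¹ : Aˣ) : A) = (((gU c hc)⁻¹ : (EE K)ˣ) : EE K) := by
  have h : ((γ⁻¹ : Aˣ) : A) = b (-1, 0) := by
    rw [hb (-1) 0]
    simp
  rw [h, Phi_basis]
  rw [zpow_zero, mul_one, zpow_neg_one]

theorem aeval_X_ratfunc (q : K[X]) :
    Polynomial.aeval (RatFunc.X : RatFunc K) q = algebraMap K[X] (RatFunc K) q := by
  rw [← RatFunc.algebraMap_X, Polynomial.aeval_algebraMap_apply, Polynomial.aeval_X_left_apply]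

include hrel hb in
theorem Phi_aeval (q : K[X]) (f : RatFunc K) :
    Phi c hc b (Polynomial.aeval ((t : Aˣ) : A) q) f = algebraMap K[X] (RatFunc K) q * f := by
  have h1 : Phi c hc b (Polynomial.aeval ((t : Aˣ) : A) q)
      = Polynomial.aeval (Phi c hc b ((t : Aˣ) : A)) q := by
    rw [← PhiAlg_apply c hc γ t b hrel hb,
      ← Polynomial.aeval_algHom_apply (PhiAlg c hc γ t b hrel hb) _ q]
    rfl
  rw [h1, Phi_t c hc γ t b hb]
  have h2 : ((mulU xUnit : (EE K)ˣ) : EE K) = Algebra.lmul K (RatFunc K) RatFunc.X := rfl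
  rw [h2, Polynomial.aeval_algHom_apply (Algebra.lmul K (RatFunc K)) _ q, aeval_X_ratfunc]
  rfl

include hb in
theorem Phi_b0_apply (j : ℤ) (f : RatFunc K) :
    Phi c hc b (b (0, j)) f = (RatFunc.X : RatFunc K) ^ j * f := by
  rw [Phi_basis, zpow_zero, one_mul, mulU_zpow_apply]
  rfl

/-! ### The key spanning lemma -/

include hc hrel hb in
theorem b_mul_gen (i j : ℤ) :
    b (i, j) * ((γ : A) - (t : A) + 1)
      = c ^ (-j) • b (i + 1, j) - b (i, j + 1) + b (i, j) := by
  have h1 : b (i, j) * (γ : A) = c ^ (-j) • b (i + 1, j) := by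
    rw [← b_gamma γ t b hb, bmul c hc γ t hrel b hb i j 1 0]
    norm_num
  have h2 : b (i, j) * (t : A) = b (i, j + 1) := by
    rw [← b_t γ t b hb, bmul c hc γ t hrel b hb i j 0 1]
    norm_num
  rw [mul_add, mul_sub, mul_one, h1, h2]

include hc hrel hb in
theorem b_mem_IW (U : Submodule K A)
    (hI : ∀ x : A, x * ((γ : A) - (t : A) + 1) ∈ U)
    (hW0 : ∀ j : ℤ, b (0, j) ∈ U)
    (hWn : ∀ k : ℕ, b (-((k : ℤ) + 1), 0) ∈ U) :
    ∀ i j : ℤ, b (i, j) ∈ U := by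
  have hsmul : ∀ (j : ℤ) (x : A), c ^ j • (c ^ (-j) • x) = x := by
    intro j x
    rw [smul_smul, ← zpow_add₀ hc, add_neg_cancel, zpow_zero, one_smul]
  intro i
  induction i using Int.induction_on with
  | zero => intro j; exact hW0 j
  | succ i ih =>
      intro j
      have heq : b ((i : ℤ) + 1, j)
          = c ^ j • (b (i, j) * ((γ : A) - (t : A) + 1) + b (i, j + 1) - b (i, j)) := by
        rw [b_mul_gen c hc γ t hrel b hb i j]
        rw [show c ^ (-j) • b ((i:ℤ) + 1, j) - b (i, j + 1) + b (i, j) + b (i, j + 1) - b (i, j)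
          = c ^ (-j) • b ((i:ℤ) + 1, j) from by abel]
        rw [hsmul j]
      rw [heq]
      exact U.smul_mem _ (U.sub_mem (U.add_mem (hI _) (ih _)) (ih _))
  | pred i ih =>
      intro j
      induction j using Int.induction_on with
      | zero =>
          have : (-(i : ℤ) - 1) = -((i : ℤ) + 1) := by ring
          rw [this]
          exact hWn i
      | succ j ihj =>
          have heq : b (-(i : ℤ) - 1, (j : ℤ) + 1)
              = c ^ (-(j : ℤ)) • b (-(i : ℤ) - 1 + 1, j) + b (-(i : ℤ) - 1, j)
                - b (-(i : ℤ) - 1, j) * ((γ : A) - (t : A) + 1) := by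
            rw [b_mul_gen c hc γ t hrel b hb (-(i : ℤ) - 1) j]
            abel
          rw [heq]
          have h0 : (-(i : ℤ) - 1 + 1) = -(i : ℤ) := by ring
          refine U.sub_mem (U.add_mem (U.smul_mem _ ?_) ihj) (hI _)
          rw [h0]
          exact ih j
      | pred j ihj =>
          have heq : b (-(i : ℤ) - 1, -(j : ℤ) - 1)
              = b (-(i : ℤ) - 1, -(j : ℤ) - 1) * ((γ : A) - (t : A) + 1)
                - c ^ (-(-(j : ℤ) - 1)) • b (-(i : ℤ) - 1 + 1, -(j : ℤ) - 1)
                + b (-(i : ℤ) - 1, -(j : ℤ) - 1 + 1) := by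
            rw [b_mul_gen c hc γ t hrel b hb (-(i : ℤ) - 1) (-(j : ℤ) - 1)]
            abel
          rw [heq]
          have h0 : (-(i : ℤ) - 1 + 1) = -(i : ℤ) := by ring
          have h1 : (-(j : ℤ) - 1 + 1) = -(j : ℤ) := by ring
          refine U.add_mem (U.sub_mem (hI _) (U.smul_mem _ ?_)) ?_
          · rw [h0]; exact ih _
          · rw [h1]; exact ihj

end AlgebraSide

end RatFuncSide


end Stmt15

open Stmt15 Polynomial

/-- Let `K` be a field and `c ∈ K*` not a root of unity. Let
`A = K⟨γ^{±1}, t^{±1}⟩/(γt - ctγ)` be the quantum torus: the `K`-algebra with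
basis `{γ^i t^j : i, j ∈ ℤ}` (given by units `γ`, `t`) and relation `γt = c·tγ`.
Then the `A`-module `M = A/A(γ - t + 1)` is irreducible, but for every prime
`p ≥ 2` it is not induced from the subalgebra `B` generated by `γ^p, γ^{-p},
t, t⁻¹` — i.e. `M` is not the internal direct sum `⊕_{0 ≤ i < p} γ^i N₀` for any
`B`-stable subspace `N₀` (equivalently `M ≇ A ⊗_B N` for any `B`-module `N`).
Consequently the corresponding representation of the Heisenberg group over `ℤ`
(on which the central element acts by `c`) is irreducible but not finitely
induced from any representation of a proper subgroup. -/
theorem stmt15 {K : Type} [Field K] (c : K)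
    (hroot : ∀ n : ℕ, 0 < n → c ^ n ≠ 1)
    (A : Type) [Ring A] [Algebra K A] (γ t : Aˣ)
    (hrel : (γ : A) * t = algebraMap K A c * ((t : A) * γ))
    (b : Module.Basis (ℤ × ℤ) K A)
    (hb : ∀ i j : ℤ, b (i, j) = ((γ ^ i : Aˣ) : A) * ((t ^ j : Aˣ) : A))
    (M : Type) [AddCommGroup M] [Module A M] [Module K M] [IsScalarTower K A M]
    (e : M ≃ₗ[A] (A ⧸ (Submodule.span A {(γ : A) - (t : A) + 1} : Submodule A A))) :
    IsSimpleModule A M ∧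
    ∀ p : ℕ, p.Prime →
      ¬ ∃ N₀ : Submodule K M,
        (∀ a ∈ Algebra.adjoin K {((γ ^ (p : ℤ) : Aˣ) : A), ((γ ^ (-(p : ℤ)) : Aˣ) : A),
            ((t : Aˣ) : A), ((t⁻¹ : Aˣ) : A)},
          ∀ m ∈ N₀, a • m ∈ N₀) ∧
        (∀ m : M, ∃! v : Fin p → N₀,
          m = ∑ i : Fin p, ((γ ^ (i : ℕ) : Aˣ) : A) • (v i : M)) := by
  classical
  haveI hAnt : Nontrivial A := ⟨b (0, 0), 0, b.ne_zero (0, 0)⟩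
  have hc : c ≠ 0 := by
    intro h0
    have h1 : (γ : A) * t = 0 := by rw [hrel, h0, map_zero, zero_mul]
    have h2 : (1 : A) = 0 := by
      calc (1 : A) = (((γ * t)⁻¹ : Aˣ) : A) * ((γ * t : Aˣ) : A) := (Units.inv_mul _).symm
        _ = (((γ * t)⁻¹ : Aˣ) : A) * ((γ : A) * t) := by rw [Units.val_mul]
        _ = 0 := by rw [h1, mul_zero]
    exact one_ne_zero h2
  set I : Submodule A A := Submodule.span A {(γ : A) - (t : A) + 1} with hIdef
  set ψ : A →ₗ[K] RatFunc K := psiA c hc b with hψdef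
  -- the ideal is inside the kernel
  have hIker : I.restrictScalars K ≤ LinearMap.ker ψ := by
    intro x hx
    obtain ⟨a, ha⟩ := Submodule.mem_span_singleton.mp hx
    rw [LinearMap.mem_ker, ← ha]
    exact psiA_ideal c hc γ t hrel b hb a
  -- the complement
  set wimg : ℤ ⊕ ℕ → A := Sum.elim (fun j => b (0, j)) (fun k => b (-((k : ℤ) + 1), 0))
    with hwimg
  set W : Submodule K A := Submodule.span K (Set.range wimg) with hWdef
  have hIW : ∀ x : A, x ∈ I.restrictScalars K ⊔ W := by
    intro x
    have hbmem : ∀ i j : ℤ, b (i, j) ∈ I.restrictScalars K ⊔ W := by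
      apply b_mem_IW c hc γ t hrel b hb
      · intro y
        apply Submodule.mem_sup_left
        show y * ((γ : A) - (t : A) + 1) ∈ I
        exact Submodule.mem_span_singleton.mpr ⟨y, by rw [smul_eq_mul]⟩
      · intro j
        exact Submodule.mem_sup_right (Submodule.subset_span ⟨Sum.inl j, rfl⟩)
      · intro k
        exact Submodule.mem_sup_right (Submodule.subset_span ⟨Sum.inr k, rfl⟩)
    have hx : x ∈ Submodule.span K (Set.range b) := by rw [b.span_eq]; trivial
    refine Submodule.span_le.mpr ?_ hx
    rintro y ⟨⟨i, j⟩, rfl⟩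
    exact hbmem i j
  -- exact kernel
  have hkerI : LinearMap.ker ψ ≤ I.restrictScalars K := by
    intro x hx
    obtain ⟨y, hy, w, hw, hyw⟩ := Submodule.mem_sup.mp (hIW x)
    have hxker : ψ x = 0 := hx
    have hyker : ψ y = 0 := hIker hy
    have hw0 : ψ w = 0 := by
      have : ψ x = ψ y + ψ w := by rw [← map_add, hyw]
      rw [hxker, hyker, zero_add] at this
      exact this.symm
    obtain ⟨l, hl⟩ := Finsupp.mem_span_range_iff_exists_finsupp.mp hw
    have hl0 : (Finsupp.linearCombination K (vfam c)) l = 0 := by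
      rw [Finsupp.linearCombination_apply]
      have hwl : ψ w = l.sum fun i a => a • vfam c i := by
        rw [← hl, map_finsuppSum]
        exact Finsupp.sum_congr fun i _ => by
          rw [map_smul]
          exact congrArg (fun z => l i • z) (psiA_wimg c hc b i)
      rw [← hwl, hw0]
    have hlz := linearIndependent_iff.mp (vfam_indep c hroot hc) l hl0
    have hwz : w = 0 := by rw [← hl, hlz, Finsupp.sum_zero_index]
    rw [← hyw, hwz, add_zero]
    exact hy
  -- the embedding of M
  set ψbar : (A ⧸ I) →ₗ[K] RatFunc K :=
    ((I.restrictScalars K).liftQ ψ hIker).comp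
      ((Submodule.Quotient.restrictScalarsEquiv K I).symm : (A ⧸ I) →ₗ[K] _) with hψbar
  have hψbar_mk : ∀ a : A, ψbar (Submodule.Quotient.mk a) = ψ a := by
    intro a
    rw [hψbar]
    simp only [LinearMap.comp_apply, LinearEquiv.coe_coe,
      Submodule.Quotient.restrictScalarsEquiv_symm_mk, Submodule.liftQ_apply]
  set Ψ : M →ₗ[K] RatFunc K := ψbar.comp ((e.restrictScalars K : M ≃ₗ[K] _) : M →ₗ[K] _)
    with hΨdef
  have hΨapp : ∀ m : M, Ψ m = ψbar (e m) := fun m => rfl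
  have hΨinj : Function.Injective Ψ := by
    have h1 : Function.Injective ψbar := by
      have hker : LinearMap.ker ((I.restrictScalars K).liftQ ψ hIker) = ⊥ :=
        Submodule.ker_liftQ_eq_bot _ _ hIker hkerI
      have h2 := LinearMap.ker_eq_bot.mp hker
      intro x y hxy
      exact (Submodule.Quotient.restrictScalarsEquiv K I).symm.injective (h2 hxy)
    intro x y hxy
    exact e.injective (h1 hxy)
  have hΨequiv : ∀ (a : A) (m : M), Ψ (a • m) = Phi c hc b a (Ψ m) := by
    intro a m
    obtain ⟨y, hy⟩ := Submodule.Quotient.mk_surjective I (e m)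
    have h1 : e (a • m) = Submodule.Quotient.mk (a * y) := by
      rw [map_smul, ← hy, ← Submodule.Quotient.mk_smul, smul_eq_mul]
    rw [hΨapp, h1, hψbar_mk, hΨapp, ← hy, hψbar_mk]
    exact psiA_mul_apply c hc γ t hrel b hb a y
  set m₀ : M := e.symm (Submodule.Quotient.mk 1) with hm₀def
  have hΨm₀ : Ψ m₀ = 1 := by
    rw [hΨapp, hm₀def, e.apply_symm_apply, hψbar_mk]
    show Phi c hc b 1 1 = 1
    rw [Phi_one c hc γ t b hb, Module.End.one_apply]
  have hm₀ : m₀ ≠ 0 := by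
    intro h
    rw [h, map_zero] at hΨm₀
    exact one_ne_zero hΨm₀.symm
  haveI : Nontrivial M := ⟨m₀, 0, hm₀⟩
  have hrangeΨ : ∀ m : M, ∃ a : A, Ψ m = ψ a := by
    intro m
    obtain ⟨a, ha⟩ := Submodule.Quotient.mk_surjective I (e m)
    exact ⟨a, by rw [hΨapp, ← ha, hψbar_mk]⟩
  have halgden : ∀ f : RatFunc K, algebraMap K[X] (RatFunc K) f.denom * f
      = algebraMap K[X] (RatFunc K) f.num := by
    intro f
    have h := RatFunc.num_div_denom f
    calc algebraMap K[X] (RatFunc K) f.denom * f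
        = algebraMap K[X] (RatFunc K) f.num / algebraMap K[X] (RatFunc K) f.denom
            * algebraMap K[X] (RatFunc K) f.denom := by rw [h]; ring
      _ = algebraMap K[X] (RatFunc K) f.num :=
          div_mul_cancel₀ _ (RatFunc.algebraMap_ne_zero (RatFunc.denom_ne_zero f))
  constructor
  · -- simplicity
    haveI : Nontrivial (Submodule A M) := (Submodule.nontrivial_iff A).mpr ‹Nontrivial M›
    refine { toIsSimpleOrder := ⟨fun N => ?_⟩ }
    by_cases hN : N = ⊥
    · exact Or.inl hN
    right
    obtain ⟨m1, hm1N, hm1ne⟩ := (Submodule.ne_bot_iff N).mp hN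
    set N' : Submodule K (RatFunc K) := Submodule.map Ψ (N.restrictScalars K) with hN'def
    have hN'stab : ∀ (a : A) (f : RatFunc K), f ∈ N' → Phi c hc b a f ∈ N' := by
      rintro a f ⟨m, hm, rfl⟩
      exact ⟨a • m, N.smul_mem a hm, hΨequiv a m⟩
    have hpoly : ∀ (q : K[X]) (f : RatFunc K), f ∈ N' →
        algebraMap K[X] (RatFunc K) q * f ∈ N' := by
      intro q f hf
      have h1 := hN'stab (Polynomial.aeval ((t : Aˣ) : A) q) f hf
      rwa [Phi_aeval c hc γ t hrel b hb] at h1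
    set J : Ideal K[X] :=
      { carrier := {q | algebraMap K[X] (RatFunc K) q ∈ N'}
        add_mem' := fun ha hb' => by
          simp only [Set.mem_setOf_eq, map_add] at *
          exact N'.add_mem ha hb'
        zero_mem' := by
          simp only [Set.mem_setOf_eq, map_zero]
          exact N'.zero_mem
        smul_mem' := fun r x hx => by
          simp only [Set.mem_setOf_eq, smul_eq_mul, map_mul] at *
          exact hpoly r _ hx } with hJdef
    have hJmem : ∀ q : K[X], q ∈ J ↔ algebraMap K[X] (RatFunc K) q ∈ N' := fun q => Iff.rfl
    -- J is nonzero
    have hf0 : Ψ m1 ≠ 0 := fun h => hm1ne (hΨinj (by rw [h, map_zero]))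
    have hfN' : Ψ m1 ∈ N' := ⟨m1, hm1N, rfl⟩
    have hnum : (Ψ m1).num ∈ J := by
      rw [hJmem, ← halgden (Ψ m1)]
      exact hpoly _ _ hfN'
    haveI hJprin : J.IsPrincipal := IsPrincipalIdealRing.principal J
    set h0 : K[X] := Submodule.IsPrincipal.generator J with hh0def
    have hJspan : Ideal.span {h0} = J := Ideal.span_singleton_generator J
    have hh0mem : h0 ∈ J := Submodule.IsPrincipal.generator_mem J
    have hh0ne : h0 ≠ 0 := by
      intro h
      have : (Ψ m1).num ∈ Ideal.span {(0 : K[X])} := by rw [h] at hJspan; rw [hJspan]; exact hnum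
      rw [Ideal.span_singleton_eq_bot.mpr rfl] at this
      exact RatFunc.num_ne_zero hf0 this
    -- the twisted polynomial is in J
    have hcompJ : cmp c⁻¹ h0 ∈ J := by
      have h1 : algebraMap K[X] (RatFunc K) h0 ∈ N' := hh0mem
      have h2 := hN'stab ((γ⁻¹ : Aˣ) : A) _ h1
      rw [Phi_gamma_inv c hc γ t b hb, gU_inv_apply] at h2
      have h3 := hpoly (C c⁻¹ * X - 1) _ h2
      have key : algebraMap K[X] (RatFunc K) (C c⁻¹ * X - 1)
          * sc c⁻¹ (inv_ne_zero hc)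
              ((RatFunc.X - 1)⁻¹ * algebraMap K[X] (RatFunc K) h0)
          = algebraMap K[X] (RatFunc K) (cmp c⁻¹ h0) := by
        rw [map_mul (sc c⁻¹ (inv_ne_zero hc)) _ _, map_inv₀ (sc c⁻¹ (inv_ne_zero hc)), x1_eq,
          sc_alg, sc_alg]
        have hcmp1 : cmp c⁻¹ (X - 1 : K[X]) = C c⁻¹ * X - 1 := by
          rw [map_sub, cmp_X, map_one]
        rw [hcmp1, ← mul_assoc, mul_inv_cancel₀, one_mul]
        exact RatFunc.algebraMap_ne_zero (dfactor_ne_zero c⁻¹)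
      rwa [key] at h3
    have hdvd : h0 ∣ cmp c⁻¹ h0 := Ideal.mem_span_singleton.mp (by rw [hJspan]; exact hcompJ)
    obtain ⟨w, hw⟩ := hdvd
    have hcne : cmp c⁻¹ h0 ≠ 0 := cmp_ne_zero (inv_ne_zero hc) hh0ne
    have hwne : w ≠ 0 := by rintro rfl; rw [mul_zero] at hw; exact hcne hw
    have hdeg : h0.natDegree = h0.natDegree + w.natDegree := by
      have h1 := congrArg natDegree hw
      rwa [cmp_natDegree (inv_ne_zero hc), natDegree_mul hh0ne hwne] at h1
    have hwdeg : w.natDegree = 0 := by omega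
    have hwC : w = C (w.coeff 0) := eq_C_of_natDegree_eq_zero hwdeg
    set lam : K := w.coeff 0 with hlamdef
    have hcoef : ∀ n, c⁻¹ ^ n * h0.coeff n = h0.coeff n * lam := by
      intro n
      have h1 := congrArg (fun p => p.coeff n) hw
      rw [cmp_coeff] at h1
      rw [h1, hwC, Polynomial.coeff_mul_C]
    set d : ℕ := h0.natDegree with hddef
    have hld : h0.coeff d ≠ 0 := by
      rw [hddef, Polynomial.coeff_natDegree]
      exact Polynomial.leadingCoeff_ne_zero.mpr hh0ne
    have hlamval : lam = c⁻¹ ^ d := by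
      have h1 := hcoef d
      rw [mul_comm (c⁻¹ ^ d) (h0.coeff d)] at h1
      exact (mul_left_cancel₀ hld h1.symm)
    have hmono : ∀ n, n ≠ d → h0.coeff n = 0 := by
      intro n hn
      by_cases hgt : d < n
      · exact Polynomial.coeff_eq_zero_of_natDegree_lt hgt
      have hlt : n < d := by omega
      by_contra hne0
      have h1 : c⁻¹ ^ n * h0.coeff n = c⁻¹ ^ d * h0.coeff n := by
        rw [hcoef n, hlamval, mul_comm]
      have h2 : c⁻¹ ^ n = c⁻¹ ^ d := mul_right_cancel₀ hne0 h1
      have h3 : c ^ n = c ^ d := by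
        have := congrArg (fun x : K => x⁻¹) h2
        simpa [inv_pow] using this
      exact hn (cpow_inj c hroot hc h3)
    have hh0eq : h0 = C (h0.coeff d) * X ^ d := by
      ext n
      by_cases hn : n = d
      · subst hn; simp [Polynomial.coeff_C_mul, Polynomial.coeff_X_pow]
      · rw [hmono n hn]
        simp [Polynomial.coeff_C_mul, Polynomial.coeff_X_pow, hn]
    have h1N : (1 : RatFunc K) ∈ N' := by
      have hmem : algebraMap K[X] (RatFunc K) h0 ∈ N' := hh0mem
      rw [hh0eq] at hmem
      have hstep := hN'stab (b (0, -(d : ℤ))) _ hmem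
      rw [Phi_b0_apply c hc γ t b hb] at hstep
      have hval : (RatFunc.X : RatFunc K) ^ (-(d : ℤ))
            * algebraMap K[X] (RatFunc K) (C (h0.coeff d) * X ^ d)
          = h0.coeff d • 1 := by
        rw [map_mul, map_pow, RatFunc.algebraMap_X]
        have hCc : algebraMap K[X] (RatFunc K) (C (h0.coeff d))
            = algebraMap K (RatFunc K) (h0.coeff d) := by
          rw [IsScalarTower.algebraMap_apply K K[X] (RatFunc K), algebraMap_eq]
        rw [hCc, ← zpow_natCast (RatFunc.X : RatFunc K) d, ← mul_assoc,
          mul_comm ((RatFunc.X : RatFunc K) ^ (-(d : ℤ))), mul_assoc,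
          ← zpow_add₀ RatFunc.X_ne_zero]
        simp [Algebra.smul_def]
      rw [hval] at hstep
      have := N'.smul_mem (h0.coeff d)⁻¹ hstep
      rwa [smul_smul, inv_mul_cancel₀ hld, one_smul] at this
    -- conclude
    rw [Submodule.eq_top_iff']
    intro m
    obtain ⟨a, ha⟩ := hrangeΨ m
    have hmem : Ψ m ∈ N' := by
      rw [ha]
      have := hN'stab a _ h1N
      rwa [show Phi c hc b a 1 = ψ a from rfl] at this
    obtain ⟨m', hm', hmm⟩ := hmem
    rwa [← hΨinj hmm]

  · -- non-induced
    intro p hp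
    rintro ⟨N₀, hstab, hdec⟩
    haveI : NeZero p := ⟨hp.ne_zero⟩
    -- a nonzero element of N₀
    obtain ⟨v, hv, -⟩ := hdec m₀
    have hex : ∃ i : Fin p, (v i : M) ≠ 0 := by
      by_contra hall
      push_neg at hall
      apply hm₀
      rw [hv]
      apply Finset.sum_eq_zero
      intro i _
      rw [hall i, smul_zero]
    obtain ⟨i0, hi0⟩ := hex
    set n : M := (v i0 : M) with hndef
    have hnN : n ∈ N₀ := (v i0).2
    have hn0 : n ≠ 0 := hi0
    -- membership of polynomial actions
    have htmem : ((t : Aˣ) : A) ∈ Algebra.adjoin K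
        {((γ ^ (p : ℤ) : Aˣ) : A), ((γ ^ (-(p : ℤ)) : Aˣ) : A),
          ((t : Aˣ) : A), ((t⁻¹ : Aˣ) : A)} := by
      apply Algebra.subset_adjoin
      simp
    have haevalmem : ∀ q : K[X], (Polynomial.aeval ((t : Aˣ) : A) q) ∈ Algebra.adjoin K
        {((γ ^ (p : ℤ) : Aˣ) : A), ((γ ^ (-(p : ℤ)) : Aˣ) : A),
          ((t : Aˣ) : A), ((t⁻¹ : Aˣ) : A)} := by
      intro q
      set S := Algebra.adjoin K
        {((γ ^ (p : ℤ) : Aˣ) : A), ((γ ^ (-(p : ℤ)) : Aˣ) : A),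
          ((t : Aˣ) : A), ((t⁻¹ : Aˣ) : A)} with hS
      have h1 : Polynomial.aeval ((t : Aˣ) : A) q
          = S.val (Polynomial.aeval (⟨((t : Aˣ) : A), htmem⟩ : S) q) := by
        rw [← Polynomial.aeval_algHom_apply S.val _ q]
        rfl
      rw [h1]
      exact (Polynomial.aeval (⟨((t : Aˣ) : A), htmem⟩ : S) q).2
    -- Ψ of polynomial actions
    have hΨpoly : ∀ (q : K[X]) (m : M),
        Ψ ((Polynomial.aeval ((t : Aˣ) : A) q) • m)
          = algebraMap K[X] (RatFunc K) q * Ψ m := by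
      intro q m
      rw [hΨequiv, Phi_aeval c hc γ t hrel b hb]
    -- the two dependent elements
    set x : RatFunc K := Ψ n with hxdef
    have hx0 : x ≠ 0 := fun h => hn0 (hΨinj (by rw [map_zero, ← hxdef, h]))
    set y : RatFunc K := Ψ ((γ : A) • n) with hydef
    have hyval : y = (RatFunc.X - 1) * sc c hc x := by
      rw [hydef, hΨequiv, Phi_gamma c hc γ t b hb, gU_apply]
    have hy0 : y ≠ 0 := by
      rw [hyval]
      apply mul_ne_zero (x1_ne_zero (K := K))
      intro h
      apply hx0
      have h2 := congrArg (sc c⁻¹ (inv_ne_zero hc)) h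
      rwa [sc_sc_self, map_zero] at h2
    set ρ : RatFunc K := y * x⁻¹ with hρdef
    have hρ0 : ρ ≠ 0 := mul_ne_zero hy0 (inv_ne_zero hx0)
    set r : K[X] := ρ.num with hrdef
    set s : K[X] := ρ.denom with hsdef
    have hr0 : r ≠ 0 := RatFunc.num_ne_zero hρ0
    have hs0 : s ≠ 0 := RatFunc.denom_ne_zero ρ
    have hkey : algebraMap K[X] (RatFunc K) s * y = algebraMap K[X] (RatFunc K) r * x := by
      have h1 : y = ρ * x := by rw [hρdef, mul_assoc, inv_mul_cancel₀ hx0, mul_one]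
      have h2 : algebraMap K[X] (RatFunc K) s * ρ = algebraMap K[X] (RatFunc K) r :=
        halgden ρ
      rw [h1, ← mul_assoc, h2]
    set s' : K[X] := cmp c⁻¹ s with hs'def
    have hs'0 : s' ≠ 0 := cmp_ne_zero (inv_ne_zero hc) hs0
    have hcmps' : cmp c s' = s := by
      rw [hs'def, cmp_cmp, inv_mul_cancel₀ hc, cmp_one]
    -- the element with two decompositions
    set u : M := (Polynomial.aeval ((t : Aˣ) : A) r) • n with hudef
    have humem : u ∈ N₀ := hstab _ (haevalmem r) n hnN
    have hu0 : u ≠ 0 := by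
      intro h
      have h1 : Ψ u = 0 := by rw [h, map_zero]
      rw [hudef, hΨpoly] at h1
      exact (mul_ne_zero (RatFunc.algebraMap_ne_zero hr0) hx0) h1
    set u' : M := (Polynomial.aeval ((t : Aˣ) : A) s') • n with hu'def
    have hu'mem : u' ∈ N₀ := hstab _ (haevalmem s') n hnN
    have hueq : u = (γ : A) • u' := by
      apply hΨinj
      rw [hudef, hΨpoly, hu'def, hΨequiv, hΨpoly, Phi_gamma c hc γ t b hb, gU_apply]
      rw [map_mul (sc c hc) _ _, sc_alg, hcmps']
      calc algebraMap K[X] (RatFunc K) r * x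
          = algebraMap K[X] (RatFunc K) s * y := hkey.symm
        _ = algebraMap K[X] (RatFunc K) s * ((RatFunc.X - 1) * sc c hc x) := by rw [hyval]
        _ = (RatFunc.X - 1) * (algebraMap K[X] (RatFunc K) s * sc c hc x) := by ring
    -- two decompositions of u
    have hlt0 : (0 : ℕ) < p := hp.pos
    have hlt1 : (1 : ℕ) < p := hp.one_lt
    set i0' : Fin p := ⟨0, hlt0⟩ with hi0'def
    set i1' : Fin p := ⟨1, hlt1⟩ with hi1'def
    set w1 : Fin p → N₀ := fun i => if i = i0' then ⟨u, humem⟩ else 0 with hw1def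
    set w2 : Fin p → N₀ := fun i => if i = i1' then ⟨u', hu'mem⟩ else 0 with hw2def
    have hsum1 : u = ∑ i : Fin p, ((γ ^ (i : ℕ) : Aˣ) : A) • (w1 i : M) := by
      rw [Fintype.sum_eq_single i0']
      · rw [hw1def]
        simp only [if_pos rfl]
        show u = ((γ ^ ((i0' : Fin p) : ℕ) : Aˣ) : A) • u
        rw [hi0'def]
        show u = ((γ ^ (0 : ℕ) : Aˣ) : A) • u
        rw [pow_zero, Units.val_one, one_smul]
      · intro i hi
        rw [hw1def]
        simp only [if_neg hi]
        show ((γ ^ (i : ℕ) : Aˣ) : A) • ((0 : N₀) : M) = 0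
        rw [Submodule.coe_zero, smul_zero]
    have hsum2 : u = ∑ i : Fin p, ((γ ^ (i : ℕ) : Aˣ) : A) • (w2 i : M) := by
      rw [Fintype.sum_eq_single i1']
      · rw [hw2def]
        simp only [if_pos rfl]
        show u = ((γ ^ ((i1' : Fin p) : ℕ) : Aˣ) : A) • u'
        rw [hi1'def]
        show u = ((γ ^ (1 : ℕ) : Aˣ) : A) • u'
        rw [pow_one, hueq]
      · intro i hi
        rw [hw2def]
        simp only [if_neg hi]
        show ((γ ^ (i : ℕ) : Aˣ) : A) • ((0 : N₀) : M) = 0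
        rw [Submodule.coe_zero, smul_zero]
    obtain ⟨vv, hvv, huniq⟩ := hdec u
    have h12 : w1 = w2 := (huniq w1 hsum1).trans (huniq w2 hsum2).symm
    have hcontr := congrArg (fun f => (f i0' : M)) h12
    rw [hw1def, hw2def] at hcontr
    simp only [if_pos rfl] at hcontr
    have hne01 : i0' ≠ i1' := by
      intro h
      have := congrArg (fun i : Fin p => (i : ℕ)) h
      simp [hi0'def, hi1'def] at this
    rw [if_neg hne01] at hcontr
    simp only [Submodule.coe_zero] at hcontr
    exact hu0 hcontr
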